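/- Fix an integer k ≥ 3 and constants A⁻, A⁺, B, P, W > 0; set C₋ := (min{B^{1/k}/(3P/5), √(A⁻)/k})^k, ϑ := (W/k)((4/5)^{k+3} B)^{1/k − 1}, and C₊ := (max{B^{1/k}/(2P/5), ϑ, √(A⁺)/k})^k. Let L ≥ 2P and let w : [2P/5, L] → (0,∞) be C¹ with w(2P/5) ≤ B, w(3P/5) ≥ B, (w^{1/k})′(σ) ≤ ϑ for all σ ∈ [2P/5, 3P/5], and √(A⁻)/k ≤ (w^{1/k})′(σ) ≤ √(A⁺)/k for all σ ∈ [3P/5, L]. Then C₋ σ^k ≤ w(σ) ≤ C₊ σ^k for every σ ∈ [3P/5, L]. -/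

import Mathlib

open Topology Filter Asymptotics Set

/-- `C₋ = (min{B^{1/k}/(3P/5), √A⁻/k})^k`. -/
noncomputable def Cminus (k : ℕ) (Am B P : ℝ) : ℝ :=
  (min (B ^ ((1:ℝ)/(k:ℝ)) / (3*P/5)) (Real.sqrt Am / (k:ℝ)))^k

/-- `ϑ = (W/k)((4/5)^{k+3} B)^{1/k - 1}`. -/
noncomputable def theta (k : ℕ) (W B : ℝ) : ℝ :=
  (W/(k:ℝ)) * (((4:ℝ)/5)^(k+3) * B) ^ ((1:ℝ)/(k:ℝ) - 1)

/-- `C₊ = (max{B^{1/k}/(2P/5), ϑ, √A⁺/k})^k`. -/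
noncomputable def Cplus (k : ℕ) (Ap B P W : ℝ) : ℝ :=
  (max (max (B ^ ((1:ℝ)/(k:ℝ)) / (2*P/5)) (theta k W B)) (Real.sqrt Ap / (k:ℝ)))^k

/-- the growth estimate `C₋ σ^k ≤ w(σ) ≤ C₊ σ^k` at the
parabolic–intermediate interface. -/
theorem stmt14 (k : ℕ) (hk : 3 ≤ k) (Am Ap B P W : ℝ)
    (hAm : 0 < Am) (hAp : 0 < Ap) (hB : 0 < B) (hP : 0 < P) (hW : 0 < W)
    (L : ℝ) (hL : 2*P ≤ L) (w : ℝ → ℝ)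
    (hpos : ∀ σ ∈ Set.Icc (2*P/5) L, 0 < w σ)
    (hC1 : ContDiffOn ℝ 1 w (Set.Icc (2*P/5) L))
    (hwa : w (2*P/5) ≤ B)
    (hwb : B ≤ w (3*P/5))
    (htheta : ∀ σ ∈ Set.Icc (2*P/5) (3*P/5),
      deriv (fun s => w s ^ ((1:ℝ)/(k:ℝ))) σ ≤ theta k W B)
    (hderiv : ∀ σ ∈ Set.Icc (3*P/5) L,
      Real.sqrt Am / (k:ℝ) ≤ deriv (fun s => w s ^ ((1:ℝ)/(k:ℝ))) σ ∧
      deriv (fun s => w s ^ ((1:ℝ)/(k:ℝ))) σ ≤ Real.sqrt Ap / (k:ℝ)) :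
    ∀ σ ∈ Set.Icc (3*P/5) L,
      Cminus k Am B P * σ^k ≤ w σ ∧ w σ ≤ Cplus k Ap B P W * σ^k := by

  have hkpos : 0 < k := by omega
  have hkR : (0:ℝ) < (k:ℝ) := by exact_mod_cast hkpos
  have hexp : (0:ℝ) ≤ (1:ℝ)/(k:ℝ) := by positivity
  set f : ℝ → ℝ := fun s => w s ^ ((1:ℝ)/(k:ℝ)) with hf
  have ha23 : 2*P/5 < 3*P/5 := by linarith
  have ha3L : 3*P/5 ≤ L := by linarith
  have hsub : Icc (3*P/5) L ⊆ Icc (2*P/5) L := Icc_subset_Icc (by linarith) le_rfl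
  have hcont : ContinuousOn f (Icc (2*P/5) L) :=
    (hC1.continuousOn).rpow_const (fun x hx => Or.inl (ne_of_gt (hpos x hx)))
  have hdiff : ∀ s ∈ Ioo (2*P/5) L, DifferentiableAt ℝ f s := by
    intro s hs
    have hs' : s ∈ Icc (2*P/5) L := Ioo_subset_Icc_self hs
    have hw : DifferentiableAt ℝ w s :=
      ((hC1.differentiableOn one_ne_zero) s hs').differentiableAt
        (Icc_mem_nhds hs.1 hs.2)
    exact hw.rpow_const (Or.inl (ne_of_gt (hpos s hs')))
  have key : ∀ a b : ℝ, 2*P/5 ≤ a → a < b → b ≤ L →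
      ∃ c ∈ Ioo a b, f b - f a = deriv f c * (b - a) := by
    intro a b ha hab hb
    obtain ⟨c, hc, hceq⟩ := exists_deriv_eq_slope f hab
      (hcont.mono (Icc_subset_Icc ha hb))
      (fun s hs => (hdiff s ⟨lt_of_le_of_lt ha hs.1, lt_of_lt_of_le hs.2 hb⟩).differentiableWithinAt)
    refine ⟨c, hc, ?_⟩
    rw [hceq, div_mul_cancel₀]
    exact sub_ne_zero.mpr hab.ne'
  -- value of f at 3P/5
  have ha3mem : (3*P/5) ∈ Icc (2*P/5) L := ⟨ha23.le, ha3L⟩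
  have ha2mem : (2*P/5) ∈ Icc (2*P/5) L := ⟨le_rfl, by linarith⟩
  have hfa3_lb : B ^ ((1:ℝ)/(k:ℝ)) ≤ f (3*P/5) :=
    Real.rpow_le_rpow hB.le hwb hexp
  have hfa2_ub : f (2*P/5) ≤ B ^ ((1:ℝ)/(k:ℝ)) :=
    Real.rpow_le_rpow (hpos _ ha2mem).le hwa hexp
  have hth : 0 < theta k W B := by
    unfold theta
    have h1 : (0:ℝ) < ((4:ℝ)/5)^(k+3) * B := by positivity
    positivity
  -- main
  intro σ hσ
  have hσ2 : σ ∈ Icc (2*P/5) L := hsub hσ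
  have hσpos : 0 < σ := lt_of_lt_of_le (by linarith) hσ.1
  have hwσpos : 0 < w σ := hpos σ hσ2
  have hfσk : f σ ^ k = w σ := by
    rw [hf]
    simp only
    rw [← Real.rpow_natCast (w σ ^ ((1:ℝ)/(k:ℝ))) k, ← Real.rpow_mul hwσpos.le,
      one_div, inv_mul_cancel₀ hkR.ne', Real.rpow_one]
  constructor
  · -- lower bound
    set m := min (B ^ ((1:ℝ)/(k:ℝ)) / (3*P/5)) (Real.sqrt Am / (k:ℝ)) with hmdef
    have hm : 0 < m := lt_min (by positivity) (by positivity)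
    have hm1 : m * (3*P/5) ≤ B ^ ((1:ℝ)/(k:ℝ)) := by
      have := min_le_left (B ^ ((1:ℝ)/(k:ℝ)) / (3*P/5)) (Real.sqrt Am / (k:ℝ))
      rw [le_div_iff₀ (by linarith : (0:ℝ) < 3*P/5)] at this
      exact this
    have hm2 : m ≤ Real.sqrt Am / (k:ℝ) := min_le_right _ _
    have hlow : m * σ ≤ f σ := by
      rcases eq_or_lt_of_le hσ.1 with h | h
      · rw [← h]; linarith
      · obtain ⟨c, hc, hce⟩ := key (3*P/5) σ ha23.le h hσ.2
        have hcmem : c ∈ Icc (3*P/5) L := ⟨hc.1.le, hc.2.le.trans hσ.2⟩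
        have hd := (hderiv c hcmem).1
        have h2 : m * (σ - 3*P/5) ≤ Real.sqrt Am / (k:ℝ) * (σ - 3*P/5) :=
          mul_le_mul_of_nonneg_right hm2 (by linarith)
        have h3 : Real.sqrt Am / (k:ℝ) * (σ - 3*P/5) ≤ deriv f c * (σ - 3*P/5) :=
          mul_le_mul_of_nonneg_right hd (by linarith)
        have hring : m * σ = m * (3*P/5) + m * (σ - 3*P/5) := by ring
        linarith
    calc Cminus k Am B P * σ^k = (m * σ)^k := by rw [Cminus, mul_pow]
      _ ≤ f σ ^ k := pow_le_pow_left₀ (by positivity) hlow k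
      _ = w σ := hfσk
  · -- upper bound
    set M := max (max (B ^ ((1:ℝ)/(k:ℝ)) / (2*P/5)) (theta k W B)) (Real.sqrt Ap / (k:ℝ)) with hMdef
    have hM1 : B ^ ((1:ℝ)/(k:ℝ)) ≤ M * (2*P/5) := by
      have h : B ^ ((1:ℝ)/(k:ℝ)) / (2*P/5) ≤ M :=
        le_trans (le_max_left (B ^ ((1:ℝ)/(k:ℝ)) / (2*P/5)) (theta k W B)) (le_max_left _ _)
      rw [div_le_iff₀ (by linarith : (0:ℝ) < 2*P/5)] at h
      exact h
    have hM2 : theta k W B ≤ M := le_trans (le_max_right _ _) (le_max_left _ _)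
    have hM3 : Real.sqrt Ap / (k:ℝ) ≤ M := le_max_right _ _
    -- f(3P/5) ≤ f(2P/5) + θ (P/5)
    obtain ⟨c, hc, hce⟩ := key (2*P/5) (3*P/5) le_rfl ha23 ha3L
    have hcmem : c ∈ Icc (2*P/5) (3*P/5) := Ioo_subset_Icc_self hc
    have hdθ := htheta c hcmem
    have hfa3_ub : f (3*P/5) ≤ M * (3*P/5) := by
      have h3 : deriv f c * (3*P/5 - 2*P/5) ≤ theta k W B * (3*P/5 - 2*P/5) :=
        mul_le_mul_of_nonneg_right hdθ (by linarith)
      have h4 : theta k W B * (3*P/5 - 2*P/5) ≤ M * (3*P/5 - 2*P/5) :=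
        mul_le_mul_of_nonneg_right hM2 (by linarith)
      have hring : M * (3*P/5) = M * (2*P/5) + M * (3*P/5 - 2*P/5) := by ring
      linarith
    have hup : f σ ≤ M * σ := by
      rcases eq_or_lt_of_le hσ.1 with h | h
      · rw [← h]; linarith
      · obtain ⟨c', hc', hce'⟩ := key (3*P/5) σ ha23.le h hσ.2
        have hcmem' : c' ∈ Icc (3*P/5) L := ⟨hc'.1.le, hc'.2.le.trans hσ.2⟩
        have hd := (hderiv c' hcmem').2
        have h2 : deriv f c' * (σ - 3*P/5) ≤ Real.sqrt Ap / (k:ℝ) * (σ - 3*P/5) :=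
          mul_le_mul_of_nonneg_right hd (by linarith)
        have h3 : Real.sqrt Ap / (k:ℝ) * (σ - 3*P/5) ≤ M * (σ - 3*P/5) :=
          mul_le_mul_of_nonneg_right hM3 (by linarith)
        have hring : M * σ = M * (3*P/5) + M * (σ - 3*P/5) := by ring
        linarith
    calc w σ = f σ ^ k := hfσk.symm
      _ ≤ (M * σ)^k := pow_le_pow_left₀ (Real.rpow_nonneg hwσpos.le _) hup k
      _ = Cplus k Ap B P W * σ^k := by rw [Cplus, mul_pow]
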